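/- Fix M > 0. Every monic real polynomial p of degree n satisfying max_{x ∈ [−1,1]} |p(x)| ≤ M · 2^{1−n} has a coefficient of absolute value at least B · 2^{bn} / n for some constants B > 0 and b > 0 depending only on M, for all sufficiently large n. -/

import Mathlib

open Polynomial

namespace FlatMonicAux

open Polynomial.Chebyshev Real

lemma myT_aux : ∀ n : ℕ,
    ((∀ j : ℕ, n < j → (T ℝ n).coeff j = 0) ∧
      (T ℝ n).coeff n = if n = 0 then 1 else 2 ^ (n - 1)) ∧
    ((∀ j : ℕ, n + 1 < j → (T ℝ (n+1)).coeff j = 0) ∧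
      (T ℝ (n+1)).coeff (n+1) = 2 ^ n) := by
  intro n
  induction n with
  | zero =>
    have e1 : ((0:ℕ):ℤ) + 1 = 1 := by norm_num
    refine ⟨⟨?_, ?_⟩, ?_, ?_⟩
    · intro j hj
      rw [show (((0:ℕ)):ℤ) = 0 from by norm_num, T_zero, Polynomial.coeff_one]
      rw [if_neg (by omega : ¬ j = 0)]
    · rw [show (((0:ℕ)):ℤ) = 0 from by norm_num, T_zero]; simp
    · intro j hj
      rw [e1, T_one]
      simp only [Polynomial.coeff_X]; rw [if_neg (by omega : ¬ 1 = j)]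
    · rw [e1, T_one]; simp
  | succ n ih =>
    obtain ⟨⟨h0, h0c⟩, h1, h1c⟩ := ih
    refine ⟨⟨h1, h1c.trans (by simp)⟩, ?_, ?_⟩
    · have hrec : T ℝ ((n:ℕ)+1+1 : ℤ) = 2 * X * T ℝ ((n:ℕ)+1 : ℤ) - T ℝ (n:ℕ) := T_add_two ℝ (n : ℤ)
      intro j hj
      have hj1 : j = (j - 1) + 1 := by omega
      rw [show (((n+1:ℕ)):ℤ) + 1 = ((n:ℕ):ℤ)+1+1 from by push_cast; ring, hrec]
      rw [Polynomial.coeff_sub, mul_assoc, Polynomial.coeff_ofNat_mul, hj1,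
        Polynomial.coeff_X_mul, h1 _ (by omega), h0 _ (by omega)]
      ring
    · have hrec : T ℝ ((n:ℕ)+1+1 : ℤ) = 2 * X * T ℝ ((n:ℕ)+1 : ℤ) - T ℝ (n:ℕ) := T_add_two ℝ (n : ℤ)
      rw [show (((n+1:ℕ)):ℤ) + 1 = ((n:ℕ):ℤ)+1+1 from by push_cast; ring, hrec]
      rw [Polynomial.coeff_sub, mul_assoc, Polynomial.coeff_ofNat_mul,
        show n+1+1 = (n+1)+1 from rfl, Polynomial.coeff_X_mul, h1c, h0 _ (by omega)]
      ring

lemma myT_coeff_eq_zero (n j : ℕ) (h : n < j) : (T ℝ n).coeff j = 0 := (myT_aux n).1.1 j h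

lemma myT_coeff_self (n : ℕ) (hn : 1 ≤ n) : (T ℝ n).coeff n = 2 ^ (n - 1) := by
  rw [(myT_aux n).1.2, if_neg (by omega)]

lemma myT_eval_pair (w u : ℂ) (h : w * u = 1) : ∀ n : ℕ,
    (T ℂ n).eval ((w + u)/2) = (w^n + u^n)/2 ∧
    (T ℂ (n+1)).eval ((w + u)/2) = (w^(n+1) + u^(n+1))/2 := by
  intro n
  induction n with
  | zero =>
    constructor
    · rw [show (((0:ℕ)):ℤ) = 0 from by norm_num, T_zero]; simp
    · rw [show (((0:ℕ)):ℤ) + 1 = 1 from by norm_num, T_one]; simp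
  | succ n ih =>
    obtain ⟨h0, h1⟩ := ih
    constructor
    · rw [show (((n+1:ℕ)):ℤ) = ((n:ℕ):ℤ) + 1 from by push_cast; ring]; exact h1
    · have hrec : T ℂ ((n:ℕ)+1+1 : ℤ) = 2 * X * T ℂ ((n:ℕ)+1 : ℤ) - T ℂ (n:ℕ) := T_add_two ℂ (n : ℤ)
      rw [show (((n+1:ℕ)):ℤ) + 1 = ((n:ℕ):ℤ)+1+1 from by push_cast; ring, hrec]
      simp only [Polynomial.eval_sub, Polynomial.eval_mul, Polynomial.eval_ofNat,
        Polynomial.eval_X, h0, h1]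
      linear_combination ((w^n + u^n)/2) * h

lemma myT_abs_le (n : ℕ) (x : ℝ) (hx : x ∈ Set.Icc (-1:ℝ) 1) : |(T ℝ n).eval x| ≤ 1 := by
  have hxc : x = Real.cos (Real.arccos x) := (Real.cos_arccos hx.1 hx.2).symm
  rw [hxc, T_real_cos]
  exact Real.abs_cos_le_one _

lemma cheb_expand : ∀ (m : ℕ) (q : ℝ[X]), q.natDegree < m →
    ∃ c : ℕ → ℝ, q = ∑ k ∈ Finset.range m, Polynomial.C (c k) * T ℝ k := by
  intro m
  induction m with
  | zero => intro q h; omega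
  | succ m ih =>
    intro q hq
    have hlc0 : (T ℝ m).coeff m ≠ 0 := by
      rcases Nat.eq_zero_or_pos m with h | h
      · subst h; rw [show (((0:ℕ)):ℤ) = 0 from by norm_num, T_zero]; simp
      · rw [(myT_aux m).1.2, if_neg (by omega)]; positivity
    set lc : ℝ := (T ℝ m).coeff m with hlc
    set q' : ℝ[X] := q - Polynomial.C (q.coeff m / lc) * T ℝ m with hq'
    have hcoeff : ∀ j, m ≤ j → q'.coeff j = 0 := by
      intro j hj
      rcases eq_or_lt_of_le hj with rfl | hj'
      · simp [hq', Polynomial.coeff_C_mul, div_mul_cancel₀ _ hlc0]; rw [← hlc, div_mul_cancel₀ _ hlc0, sub_self]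
      · have h1 : q.coeff j = 0 := Polynomial.coeff_eq_zero_of_natDegree_lt (by omega)
        have h2 : (T ℝ m).coeff j = 0 := myT_coeff_eq_zero m j hj'
        simp [hq', Polynomial.coeff_C_mul, h1, h2]
    have hrepr : q = q' + Polynomial.C (q.coeff m / lc) * T ℝ m := by rw [hq']; ring
    by_cases h0 : q' = 0
    · refine ⟨fun k => if k = m then q.coeff m / lc else 0, ?_⟩
      rw [Finset.sum_range_succ]
      beta_reduce
      rw [if_pos rfl]
      have hz : ∀ k ∈ Finset.range m,
          Polynomial.C (if k = m then q.coeff m / lc else 0) * T ℝ k = 0 := by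
        intro k hk; rw [if_neg (by simp at hk; omega)]; simp
      rw [Finset.sum_congr rfl hz, Finset.sum_const, smul_zero, zero_add]
      conv_lhs => rw [hrepr, h0, zero_add]
    · have hdeg : q'.natDegree < m := by
        have hd : q'.degree < (m : ℕ) := (Polynomial.degree_lt_iff_coeff_zero _ _).2
          (fun j hj => hcoeff j (by exact_mod_cast hj))
        exact (Polynomial.natDegree_lt_iff_degree_lt h0).2 hd
      obtain ⟨c, hc⟩ := ih q' hdeg
      refine ⟨fun k => if k = m then q.coeff m / lc else c k, ?_⟩
      rw [Finset.sum_range_succ]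
      beta_reduce
      rw [if_pos rfl]
      have hz : ∀ k ∈ Finset.range m,
          Polynomial.C (if k = m then q.coeff m / lc else c k) * T ℝ k
          = Polynomial.C (c k) * T ℝ k := by
        intro k hk; rw [if_neg (by simp at hk; omega)]
      rw [Finset.sum_congr rfl hz, ← hc, ← hrepr]

lemma integral_cos_smul (a : ℝ) (ha : a ≠ 0) :
    ∫ θ in (0:ℝ)..π, Real.cos (a * θ) = Real.sin (a * π) / a := by
  have h := intervalIntegral.integral_comp_mul_left (fun x => Real.cos x) ha (a := (0:ℝ)) (b := π)
  rw [h]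
  simp [integral_cos, smul_eq_mul, div_eq_inv_mul]

lemma integral_cos_int (a : ℤ) :
    ∫ θ in (0:ℝ)..π, Real.cos (a * θ) = if a = 0 then π else 0 := by
  rcases eq_or_ne a 0 with rfl | ha
  · simp
  · rw [if_neg ha, integral_cos_smul a (by exact_mod_cast ha)]
    rw [show ((a:ℝ) * π) = a * π from rfl, Real.sin_int_mul_pi]
    simp

lemma cos_orth (j k : ℕ) :
    ∫ θ in (0:ℝ)..π, Real.cos (j * θ) * Real.cos (k * θ)
      = if j = k then (if j = 0 then π else π/2) else 0 := by
  have hpt : ∀ θ : ℝ, Real.cos (j * θ) * Real.cos (k * θ)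
      = (Real.cos ((((j:ℤ) + k : ℤ) : ℝ) * θ) + Real.cos ((((j:ℤ) - k : ℤ) : ℝ) * θ)) / 2 := by
    intro θ
    push_cast
    rw [add_mul, sub_mul, Real.cos_add, Real.cos_sub]
    ring
  rw [intervalIntegral.integral_congr (fun θ _ => hpt θ)]
  have hi1 : IntervalIntegrable (fun θ => Real.cos ((((j:ℤ) + k : ℤ) : ℝ) * θ))
      MeasureTheory.volume 0 π := by
    apply Continuous.intervalIntegrable; fun_prop
  have hi2 : IntervalIntegrable (fun θ => Real.cos ((((j:ℤ) - k : ℤ) : ℝ) * θ))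
      MeasureTheory.volume 0 π := by
    apply Continuous.intervalIntegrable; fun_prop
  rw [intervalIntegral.integral_div, intervalIntegral.integral_add hi1 hi2,
    integral_cos_int, integral_cos_int]
  rcases eq_or_ne j k with rfl | hjk
  · rcases eq_or_ne j 0 with rfl | hj
    · norm_num
    · rw [if_neg (by omega : ¬ ((j:ℤ) + (j:ℤ) = 0)), if_pos (by ring : ((j:ℤ) - (j:ℤ) = 0)),
        if_pos rfl, if_neg hj]
      ring
  · rw [if_neg (by omega : ¬ ((j:ℤ) + (k:ℤ) = 0)), if_neg (by omega : ¬ ((j:ℤ) - (k:ℤ) = 0)),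
      if_neg hjk]
    ring

lemma cheb_coeff_bound (m : ℕ) (q : ℝ[X]) (c : ℕ → ℝ) (E : ℝ)
    (hc : q = ∑ k ∈ Finset.range m, Polynomial.C (c k) * T ℝ k)
    (hE : ∀ x ∈ Set.Icc (-1:ℝ) 1, |q.eval x| ≤ E) :
    ∀ k, k < m → |c k| ≤ 2 * E := by
  intro k hk
  have hE0 : 0 ≤ E := le_trans (abs_nonneg _) (hE 0 (by norm_num))
  have hpt : ∀ θ : ℝ, q.eval (Real.cos θ) * Real.cos (k * θ)
      = ∑ j ∈ Finset.range m, c j * (Real.cos (j * θ) * Real.cos (k * θ)) := by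
    intro θ
    rw [hc, Polynomial.eval_finset_sum, Finset.sum_mul]
    congr 1; ext j
    rw [Polynomial.eval_mul, Polynomial.eval_C, T_real_cos]
    push_cast
    ring_nf
  have hI : (∫ θ in (0:ℝ)..π, q.eval (Real.cos θ) * Real.cos (k * θ))
      = c k * (if k = 0 then π else π/2) := by
    rw [intervalIntegral.integral_congr (fun θ _ => hpt θ),
      intervalIntegral.integral_finset_sum (fun j _ => by
        apply Continuous.intervalIntegrable
        fun_prop)]
    rw [Finset.sum_eq_single k]
    · rw [intervalIntegral.integral_const_mul, cos_orth, if_pos rfl]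
    · intro j hj hjk
      rw [intervalIntegral.integral_const_mul, cos_orth, if_neg hjk, mul_zero]
    · intro h; exact absurd (Finset.mem_range.2 hk) h
  have hIb : |∫ θ in (0:ℝ)..π, q.eval (Real.cos θ) * Real.cos (k * θ)| ≤ E * π := by
    have h := intervalIntegral.norm_integral_le_of_norm_le_const
      (f := fun θ => q.eval (Real.cos θ) * Real.cos (k * θ)) (C := E) (a := (0:ℝ)) (b := π) ?_
    · simpa [abs_of_nonneg Real.pi_nonneg] using h
    · intro x _
      rw [Real.norm_eq_abs, abs_mul]
      calc |q.eval (Real.cos x)| * |Real.cos (k * x)|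
          ≤ E * 1 := by
            apply mul_le_mul (hE _ ⟨Real.neg_one_le_cos x, Real.cos_le_one x⟩)
              (Real.abs_cos_le_one _) (abs_nonneg _) hE0
        _ = E := mul_one E
  rw [hI] at hIb
  rcases eq_or_ne k 0 with rfl | hk0
  · rw [if_pos rfl, abs_mul, abs_of_nonneg Real.pi_nonneg] at hIb
    have := le_of_mul_le_mul_right hIb Real.pi_pos
    linarith
  · rw [if_neg hk0, abs_mul, abs_of_nonneg (by positivity : (0:ℝ) ≤ π/2)] at hIb
    nlinarith [Real.pi_pos, abs_nonneg (c k)]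

end FlatMonicAux

set_option maxHeartbeats 1000000 in
open FlatMonicAux Polynomial.Chebyshev in
theorem coeff_growth_of_flat_monic (M : ℝ) (hM : 0 < M) :
    ∃ B > (0 : ℝ), ∃ b > (0 : ℝ), ∃ N : ℕ, ∀ n ≥ N, ∀ p : ℝ[X],
      p.Monic → p.natDegree = n →
      (∀ x ∈ Set.Icc (-1 : ℝ) 1, |p.eval x| ≤ M * 2 ^ (1 - (n : ℤ))) →
      ∃ j ≤ n, B * (2 : ℝ) ^ (b * n) / n ≤ |p.coeff j| := by
  have hy0 : (0:ℝ) < 64 * (M + 1) := by nlinarith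
  set y : ℝ := 64 * (M + 1) with hy_def
  have hy1 : 1 ≤ y := by nlinarith
  have hs_pos : 0 < Real.sqrt (1 + y^2) := Real.sqrt_pos.2 (by positivity)
  have hsy : y < Real.sqrt (1 + y^2) := by
    nlinarith [Real.sq_sqrt (by positivity : (0:ℝ) ≤ 1 + y^2), hs_pos]
  set ρ : ℝ := y + Real.sqrt (1 + y^2) with hρ_def
  have hρ2y : 2*y < ρ := by simp only [hρ_def]; linarith
  have hρ0 : 0 < ρ := by linarith
  have hρ_id : ρ^2 = 2*y*ρ + 1 := by
    have hs : Real.sqrt (1 + y^2) ^ 2 = 1 + y^2 := Real.sq_sqrt (by positivity)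
    simp only [hρ_def]; nlinarith [hs]
  have hρ2 : 2 ≤ ρ := by nlinarith
  have hρinv : ρ⁻¹ = ρ - 2*y := by
    have h1 : ρ * (ρ - 2*y) = 1 := by nlinarith [hρ_id]
    exact inv_eq_of_mul_eq_one_right h1
  set c : ℝ := ρ / (2*y) with hc_def
  have hc1 : 1 < c := (one_lt_div (by positivity)).2 hρ2y
  have hc0 : 0 < c := by linarith
  refine ⟨1/32, by norm_num, Real.logb 2 c, Real.logb_pos (by norm_num) hc1, 1, ?_⟩
  intro n hn p hmonic hdeg hflat
  by_contra hcon
  push_neg at hcon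
  have hcpow : (2:ℝ) ^ (Real.logb 2 c * (n:ℝ)) = c ^ n := by
    rw [Real.rpow_mul (by norm_num : (0:ℝ) ≤ 2),
      Real.rpow_logb (by norm_num) (by norm_num) hc0, Real.rpow_natCast]
  set t : ℝ := (2:ℝ) ^ (1 - (n : ℤ)) with ht_def
  have ht0 : 0 < t := by positivity
  have hn1 : 1 ≤ n := hn
  have htT : t * 2^(n-1) = 1 := by
    rw [ht_def, show ((1:ℤ) - n) = -(((n-1:ℕ)):ℤ) from by omega,
      zpow_neg, zpow_natCast]
    exact inv_mul_cancel₀ (by positivity)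
  set q : ℝ[X] := p - Polynomial.C t * T ℝ n with hq_def
  have hqcoeff : ∀ j, n ≤ j → q.coeff j = 0 := by
    intro j hj
    rcases eq_or_lt_of_le hj with h | hj'
    · subst h
      have hp1 : p.coeff n = 1 := by
        have h2 := hmonic.coeff_natDegree; rwa [hdeg] at h2
      simp only [hq_def, Polynomial.coeff_sub, Polynomial.coeff_C_mul,
        myT_coeff_self n hn1, hp1]
      linarith [htT]
    · have h1 : p.coeff j = 0 := Polynomial.coeff_eq_zero_of_natDegree_lt (by omega)
      simp [hq_def, Polynomial.coeff_C_mul, h1, myT_coeff_eq_zero n j hj']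
  have hqdeg : q.natDegree < n := by
    by_cases h0 : q = 0
    · rw [h0]; simp; omega
    · exact (Polynomial.natDegree_lt_iff_degree_lt h0).2
        ((Polynomial.degree_lt_iff_coeff_zero _ _).2
          (fun j hj => hqcoeff j (by exact_mod_cast hj)))
  obtain ⟨cf, hcf⟩ := cheb_expand n q hqdeg
  have hqb : ∀ x ∈ Set.Icc (-1:ℝ) 1, |q.eval x| ≤ (M+1) * t := by
    intro x hx
    have h1 := hflat x hx
    have h2 := myT_abs_le n x hx
    have : q.eval x = p.eval x - t * (T ℝ n).eval x := by
      simp [hq_def]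
    rw [this]
    calc |p.eval x - t * (T ℝ n).eval x| ≤ |p.eval x| + |t * (T ℝ n).eval x| :=
          abs_sub _ _
      _ ≤ M * t + t * 1 := by
          refine add_le_add h1 ?_
          rw [abs_mul, abs_of_pos ht0]
          exact mul_le_mul_of_nonneg_left h2 ht0.le
      _ = (M+1) * t := by ring
  have hcfb : ∀ k, k < n → |cf k| ≤ 2 * ((M+1) * t) := cheb_coeff_bound n q cf _ hcf hqb
  -- complex side
  set w : ℂ := Complex.I * (ρ:ℂ) with hw_def
  have hw0 : w ≠ 0 := mul_ne_zero Complex.I_ne_zero (by exact_mod_cast ne_of_gt hρ0)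
  have hwu : w * w⁻¹ = 1 := mul_inv_cancel₀ hw0
  have hz : (w + w⁻¹)/2 = Complex.I * (y:ℂ) := by
    have hinv : w⁻¹ = -Complex.I * ((ρ⁻¹ : ℝ) : ℂ) := by
      rw [hw_def, mul_inv, Complex.inv_I, Complex.ofReal_inv]
    rw [hinv, hρinv]
    push_cast
    ring
  have habsw : ‖w‖ = ρ := by
    rw [hw_def, norm_mul, Complex.norm_I, Complex.norm_real, Real.norm_eq_abs, abs_of_pos hρ0, one_mul]
  have habswi : ‖w⁻¹‖ = ρ⁻¹ := by rw [norm_inv, habsw]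
  have hTval : ∀ k : ℕ, (T ℂ k).eval (Complex.I * (y:ℂ)) = (w^k + w⁻¹^k)/2 := by
    intro k; rw [← hz]; exact (myT_eval_pair w w⁻¹ hwu k).1
  have hρik : ∀ k : ℕ, ρ⁻¹^k ≤ 1 := by
    intro k
    exact pow_le_one₀ (by positivity) (by rw [inv_le_one_iff₀]; right; linarith)
  have hρk1 : ∀ k : ℕ, (1:ℝ) ≤ ρ^k := fun k => one_le_pow₀ (by linarith)
  have hTub : ∀ k : ℕ, ‖(T ℂ k).eval (Complex.I * (y:ℂ))‖ ≤ ρ^k := by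
    intro k
    rw [hTval k, norm_div, Complex.norm_two]
    have h := norm_add_le (w^k) (w⁻¹^k)
    rw [norm_pow, norm_pow, habsw, habswi] at h
    have h1 := hρik k
    have h2 := hρk1 k
    linarith
  have hTlb : (ρ^n - 1)/2 ≤ ‖(T ℂ n).eval (Complex.I * (y:ℂ))‖ := by
    rw [hTval n, norm_div, Complex.norm_two]
    have h := norm_add_le (w^n + w⁻¹^n) (-(w⁻¹^n))
    rw [add_neg_cancel_right, norm_neg, norm_pow, norm_pow, habsw, habswi] at h
    have h1 := hρik n
    have h2 : (0:ℝ) ≤ ρ⁻¹^n := by positivity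
    linarith
  -- decomposition of the evaluation
  set z : ℂ := Complex.I * (y:ℂ) with hz_def
  have hps : p = Polynomial.C t * T ℝ (n:ℤ) + q := by rw [hq_def]; ring
  have hEq : Polynomial.aeval z p = (t:ℂ) * (T ℂ (n:ℤ)).eval z
      + ∑ k ∈ Finset.range n, (cf k : ℂ) * (T ℂ (k:ℤ)).eval z := by
    conv_lhs => rw [hps, hcf]
    rw [map_add, map_mul, Polynomial.aeval_C, aeval_T, map_sum]
    simp only [map_mul, Polynomial.aeval_C, aeval_T, Complex.coe_algebraMap]
  have hgeom : ∑ k ∈ Finset.range n, ρ^k ≤ ρ^n / (ρ - 1) := by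
    rw [geom_sum_eq (by linarith : ρ ≠ 1)]
    gcongr
    · linarith
    · linarith
  have h64 : 64*(M+1) ≤ ρ - 1 := by linarith
  have hsum_ub : ‖∑ k ∈ Finset.range n, (cf k : ℂ) * (T ℂ (k:ℤ)).eval z‖
      ≤ t * ρ^n / 32 := by
    calc ‖∑ k ∈ Finset.range n, (cf k : ℂ) * (T ℂ (k:ℤ)).eval z‖
        ≤ ∑ k ∈ Finset.range n, ‖(cf k : ℂ) * (T ℂ (k:ℤ)).eval z‖ :=
          norm_sum_le _ _
      _ ≤ ∑ k ∈ Finset.range n, 2*((M+1)*t) * ρ^k := by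
          refine Finset.sum_le_sum fun k hk => ?_
          rw [norm_mul, Complex.norm_real, Real.norm_eq_abs]
          exact mul_le_mul (hcfb k (Finset.mem_range.1 hk)) (hTub k) (norm_nonneg _)
            (by positivity)
      _ = 2*((M+1)*t) * ∑ k ∈ Finset.range n, ρ^k := by rw [Finset.mul_sum]
      _ ≤ 2*((M+1)*t) * (ρ^n / (ρ - 1)) := by
          refine mul_le_mul_of_nonneg_left hgeom (by positivity)
      _ ≤ 2*((M+1)*t) * (ρ^n / (64*(M+1))) := by
          refine mul_le_mul_of_nonneg_left ?_ (by positivity)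
          exact div_le_div_of_nonneg_left (by positivity) (by positivity) h64
      _ = t * ρ^n / 32 := by field_simp; ring
  have hρn2 : (2:ℝ) ≤ ρ^n := by
    calc (2:ℝ) ≤ ρ := hρ2
      _ = ρ^1 := (pow_one ρ).symm
      _ ≤ ρ^n := pow_le_pow_right₀ (by linarith) hn1
  have hlow : t * ρ^n / 8 ≤ ‖Polynomial.aeval z p‖ := by
    rw [hEq]
    have h := norm_add_le
      ((t:ℂ) * (T ℂ (n:ℤ)).eval z + ∑ k ∈ Finset.range n, (cf k : ℂ) * (T ℂ (k:ℤ)).eval z)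
      (-(∑ k ∈ Finset.range n, (cf k : ℂ) * (T ℂ (k:ℤ)).eval z))
    rw [add_neg_cancel_right, norm_neg] at h
    have hA : ‖(t:ℂ) * (T ℂ (n:ℤ)).eval z‖ = t * ‖(T ℂ (n:ℤ)).eval z‖ := by
      rw [norm_mul, Complex.norm_real, Real.norm_eq_abs, abs_of_pos ht0]
    have h2 : t * ((ρ^n - 1)/2) ≤ ‖(t:ℂ) * (T ℂ (n:ℤ)).eval z‖ := by
      rw [hA]
      exact mul_le_mul_of_nonneg_left hTlb ht0.le
    nlinarith [hsum_ub, ht0, hρn2]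
  -- upper bound via coefficients
  have ht2 : t = 2 / 2^n := by
    rw [ht_def, zpow_sub₀ (by norm_num : (2:ℝ) ≠ 0), zpow_one, zpow_natCast]
  set D : ℝ := c^n / (32*n) with hD_def
  have hconD : ∀ j, j ≤ n → |p.coeff j| < D := by
    intro j hj
    have h := hcon j hj
    rwa [hcpow, show (1:ℝ)/32 * c^n / n = D from by rw [hD_def]; ring] at h
  have hD0 : 0 ≤ D := by positivity
  have habsz : ‖z‖ = y := by
    rw [hz_def, norm_mul, Complex.norm_I, Complex.norm_real, Real.norm_eq_abs, abs_of_pos (by linarith), one_mul]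
  have hup : ‖Polynomial.aeval z p‖ < t * ρ^n / 16 := by
    have hnn : (n:ℝ) ≠ 0 := Nat.cast_ne_zero.2 (by omega)
    have hy0' : (0:ℝ) < y := by linarith
    have hcy : c^n * y^n = ρ^n / 2^n := by
      rw [hc_def, div_pow, mul_pow]
      field_simp
    have hrepr := Polynomial.aeval_eq_sum_range' (n := n+1) (by omega : p.natDegree < n+1) z
    rw [hrepr]
    calc ‖∑ i ∈ Finset.range (n+1), p.coeff i • z^i‖
        ≤ ∑ i ∈ Finset.range (n+1), ‖p.coeff i • z^i‖ := norm_sum_le _ _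
      _ = ∑ i ∈ Finset.range (n+1), |p.coeff i| * y^i := by
          refine Finset.sum_congr rfl fun i _ => ?_
          rw [Complex.real_smul, norm_mul, Complex.norm_real, Real.norm_eq_abs, norm_pow, habsz]
      _ < ∑ i ∈ Finset.range (n+1), D * y^i := by
          refine Finset.sum_lt_sum_of_nonempty ⟨0, Finset.mem_range.2 (by omega)⟩
            fun i hi => ?_
          exact mul_lt_mul_of_pos_right (hconD i (by have := Finset.mem_range.1 hi; omega))
            (pow_pos hy0' i)
      _ ≤ ∑ i ∈ Finset.range (n+1), D * y^n := by
          refine Finset.sum_le_sum fun i hi => ?_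
          exact mul_le_mul_of_nonneg_left
            (pow_le_pow_right₀ hy1 (by have := Finset.mem_range.1 hi; omega)) hD0
      _ = (n+1 : ℝ) * (D * y^n) := by
          rw [Finset.sum_const, Finset.card_range, nsmul_eq_mul]
          push_cast
          ring
      _ ≤ (2*n : ℝ) * (D * y^n) := by
          refine mul_le_mul_of_nonneg_right ?_ (by positivity)
          have : (1:ℝ) ≤ (n:ℝ) := by exact_mod_cast hn1
          linarith
      _ = (c^n * y^n) / 16 := by
          rw [hD_def]
          field_simp
          ring
      _ = ρ^n / 2^n / 16 := by rw [hcy]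
      _ = t * ρ^n / 32 := by rw [ht2]; ring
      _ ≤ t * ρ^n / 16 := by
          have h := mul_pos ht0 (pow_pos hρ0 n)
          linarith
  linarith [hlow, hup, mul_pos ht0 (pow_pos hρ0 n)]
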